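/- arXiv:1903.04278 — 2 statements merged into one kernel-verified Lean document; each statement's English description precedes it below -/
import Mathlib

section
/- If Σ_{t∈N(s)} |θ_{st}| < 4 for every vertex s, then the naive mean field update map F(μ)_s = S(θ_s + Σ_{t∈N(s)} θ_{st} μ_t) is a contraction on [0,1]^V with respect to the sup norm, and hence has a unique fixed point. -/
noncomputable def sigmoid (x : ℝ) : ℝ := 1 / (1 + Real.exp (-x))

noncomputable def mfUpdate {V : Type*} [Fintype V] (N : V → Finset V)
    (θE : V → V → ℝ) (θ : V → ℝ) (μ : V → ℝ) (s : V) : ℝ :=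
  sigmoid (θ s + ∑ t ∈ N s, θE s t * μ t)

lemma sigmoid_hasDerivAt (x : ℝ) :
    HasDerivAt sigmoid (Real.exp (-x) / (1 + Real.exp (-x)) ^ 2) x := by
  have h1 : HasDerivAt (fun x : ℝ => 1 + Real.exp (-x)) (-Real.exp (-x)) x := by
    have := ((Real.hasDerivAt_exp (-x)).comp x (hasDerivAt_neg x)).const_add 1
    simpa [mul_comm] using this
  have hx : (1 + Real.exp (-x)) ≠ 0 := by positivity
  have h2 := h1.inv hx
  have heq : sigmoid = fun y => (1 + Real.exp (-y))⁻¹ := by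
    funext y; simp [sigmoid, one_div]
  rw [heq]
  have h3 : HasDerivAt (fun y => (1 + Real.exp (-y))⁻¹)
      (- -Real.exp (-x) / (1 + Real.exp (-x)) ^ 2) x := h2
  rw [neg_neg] at h3
  exact h3

lemma sigmoid_lipschitz : LipschitzWith 4⁻¹ sigmoid := by
  apply lipschitzWith_of_nnnorm_deriv_le (fun x => (sigmoid_hasDerivAt x).differentiableAt)
  intro x
  rw [← NNReal.coe_le_coe, coe_nnnorm, (sigmoid_hasDerivAt x).deriv, Real.norm_eq_abs]
  have h := Real.exp_pos (-x)
  rw [abs_of_nonneg (by positivity), div_le_iff₀ (by positivity)]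
  push_cast
  nlinarith [sq_nonneg (1 - Real.exp (-x))]

lemma sig_lip (a b : ℝ) : |sigmoid a - sigmoid b| ≤ |a - b| / 4 := by
  have := sigmoid_lipschitz.dist_le_mul a b
  rw [Real.dist_eq, Real.dist_eq] at this
  calc |sigmoid a - sigmoid b| ≤ ((4⁻¹ : NNReal) : ℝ) * |a - b| := this
    _ = |a - b| / 4 := by push_cast; ring

lemma sigmoid_mem (x : ℝ) : sigmoid x ∈ Set.Icc (0 : ℝ) 1 := by
  have h := Real.exp_pos (-x)
  constructor
  · unfold sigmoid; positivity
  · rw [sigmoid, div_le_one (by positivity)]; linarith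

theorem mean_field_contraction {V : Type*} [Fintype V]
    (N : V → Finset V) (θE : V → V → ℝ) (θ : V → ℝ)
    (hsmall : ∀ s, ∑ t ∈ N s, |θE s t| < 4) :
    (∃ K : ℝ, 0 ≤ K ∧ K < 1 ∧
      ∀ μ ν : V → ℝ, (∀ s, μ s ∈ Set.Icc (0 : ℝ) 1) →
        (∀ s, ν s ∈ Set.Icc (0 : ℝ) 1) →
        ‖mfUpdate N θE θ μ - mfUpdate N θE θ ν‖ ≤ K * ‖μ - ν‖) ∧
    (∃! μ : V → ℝ, (∀ s, μ s ∈ Set.Icc (0 : ℝ) 1) ∧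
      ∀ s, mfUpdate N θE θ μ s = μ s) := by
  set F : (V → ℝ) → (V → ℝ) := mfUpdate N θE θ with hF
  set K : NNReal := Finset.univ.sup (fun s => Real.toNNReal ((∑ t ∈ N s, |θE s t|) / 4))
    with hK
  have hK1 : K < 1 := by
    rw [hK, Finset.sup_lt_iff (by norm_num : (⊥ : NNReal) < 1)]
    intro s _
    rw [show (1 : NNReal) = Real.toNNReal 1 by simp,
      Real.toNNReal_lt_toNNReal_iff (by norm_num)]
    linarith [hsmall s]
  have key : ∀ μ ν : V → ℝ, ‖F μ - F ν‖ ≤ (K : ℝ) * ‖μ - ν‖ := by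
    intro μ ν
    have h0 : (0 : ℝ) ≤ (K : ℝ) * ‖μ - ν‖ := mul_nonneg K.coe_nonneg (norm_nonneg _)
    rw [pi_norm_le_iff_of_nonneg h0]
    intro s
    have hKs : (∑ t ∈ N s, |θE s t|) / 4 ≤ (K : ℝ) := by
      have hle := Finset.le_sup (f := fun s => Real.toNNReal ((∑ t ∈ N s, |θE s t|) / 4))
        (Finset.mem_univ s)
      calc (∑ t ∈ N s, |θE s t|) / 4
          ≤ (Real.toNNReal ((∑ t ∈ N s, |θE s t|) / 4) : ℝ) := Real.le_coe_toNNReal _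
        _ ≤ (K : ℝ) := by exact_mod_cast hle
    have hsum : (∑ t ∈ N s, |θE s t|) * ‖μ - ν‖ ≥ 0 :=
      mul_nonneg (Finset.sum_nonneg fun t _ => abs_nonneg _) (norm_nonneg _)
    calc ‖(F μ - F ν) s‖
        = |sigmoid (θ s + ∑ t ∈ N s, θE s t * μ t) -
            sigmoid (θ s + ∑ t ∈ N s, θE s t * ν t)| := by
          simp [hF, mfUpdate, Real.norm_eq_abs]
      _ ≤ |(θ s + ∑ t ∈ N s, θE s t * μ t) - (θ s + ∑ t ∈ N s, θE s t * ν t)| / 4 :=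
          sig_lip _ _
      _ = |∑ t ∈ N s, θE s t * (μ t - ν t)| / 4 := by
          congr 2
          simp only [mul_sub, Finset.sum_sub_distrib]
          ring
      _ ≤ (∑ t ∈ N s, |θE s t| * ‖μ - ν‖) / 4 := by
          apply div_le_div_of_nonneg_right ?_ (by norm_num)
          refine (Finset.abs_sum_le_sum_abs _ _).trans (Finset.sum_le_sum fun t _ => ?_)
          rw [abs_mul]
          exact mul_le_mul_of_nonneg_left (by
            simpa [Real.norm_eq_abs] using norm_le_pi_norm (μ - ν) t) (abs_nonneg _)
      _ = (∑ t ∈ N s, |θE s t|) / 4 * ‖μ - ν‖ := by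
          rw [← Finset.sum_mul]; ring
      _ ≤ (K : ℝ) * ‖μ - ν‖ := mul_le_mul_of_nonneg_right hKs (norm_nonneg _)
  have hLip : LipschitzWith K F :=
    LipschitzWith.of_dist_le_mul fun μ ν => by
      rw [dist_eq_norm, dist_eq_norm]; exact key μ ν
  have hC : ContractingWith K F := ⟨hK1, hLip⟩
  refine ⟨⟨(K : ℝ), K.coe_nonneg, by exact_mod_cast hK1, fun μ ν _ _ => key μ ν⟩, ?_⟩
  set μ0 := ContractingWith.fixedPoint F hC with hμ0
  have hfix : F μ0 = μ0 := hC.fixedPoint_isFixedPt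
  refine ⟨μ0, ⟨fun s => ?_, fun s => by rw [hfix]⟩, ?_⟩
  · rw [show μ0 s = F μ0 s by rw [hfix]]
    exact sigmoid_mem _
  · rintro ν ⟨-, hν⟩
    exact hC.fixedPoint_unique (funext hν)
end

section
/- Consider a discrete-time single queue evolving as Q(t+1) = max(Q(t) + a(t) − s, 0), where arrivals a(t) are i.i.d. nonnegative integer random variables with mean π and second moment E[a(t)²] ≤ σ² < ∞, and s is a constant integer service rate with π ≤ s − ε for some ε > 0. Then lim sup_{T→∞} (1/T) Σ_{t=0}^{T−1} E[Q(t)] ≤ (σ² + s²)/(2ε). -/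
set_option linter.unusedSectionVars false
set_option maxHeartbeats 1000000

open MeasureTheory ProbabilityTheory Filter Finset

section SQ
variable {Ω : Type*} [MeasureSpace Ω] [IsProbabilityMeasure (ℙ : Measure Ω)]

/-- The queue recursion driven by arrivals `b` and service `s`. -/
noncomputable def sqQueue (s : ℤ) (b : ℕ → Ω → ℝ) : ℕ → Ω → ℝ
  | 0 => fun _ => 0
  | (t+1) => fun ω => max (sqQueue s b t ω + b t ω - (s : ℝ)) 0

lemma sqQueue_nonneg (s : ℤ) (b : ℕ → Ω → ℝ) (t : ℕ) (ω : Ω) : 0 ≤ sqQueue s b t ω := by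
  cases t with
  | zero => simp [sqQueue]
  | succ t => simp [sqQueue]

lemma sqQueue_mono (s : ℤ) {b c : ℕ → Ω → ℝ} (h : ∀ u ω, b u ω ≤ c u ω) (t : ℕ) (ω : Ω) :
    sqQueue s b t ω ≤ sqQueue s c t ω := by
  induction t with
  | zero => simp [sqQueue]
  | succ t ih =>
      simp only [sqQueue]
      exact max_le_max (by linarith [h t ω]) le_rfl

lemma sqQueue_congr (s : ℤ) {b c : ℕ → Ω → ℝ} {ω : Ω} {t : ℕ}
    (h : ∀ u < t, b u ω = c u ω) : sqQueue s b t ω = sqQueue s c t ω := by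
  induction t with
  | zero => simp [sqQueue]
  | succ t ih =>
      simp only [sqQueue]
      rw [ih (fun u hu => h u (hu.trans (Nat.lt_succ_self t))), h t (Nat.lt_succ_self t)]

lemma sqQueue_le_sum (s : ℤ) (hs : (0:ℝ) ≤ s) {b : ℕ → Ω → ℝ}
    (hb : ∀ u ω, 0 ≤ b u ω) (t : ℕ) (ω : Ω) :
    sqQueue s b t ω ≤ ∑ u ∈ range t, b u ω := by
  induction t with
  | zero => simp [sqQueue]
  | succ t ih =>
      simp only [sqQueue]
      rw [Finset.sum_range_succ]
      have h1 : (0:ℝ) ≤ ∑ u ∈ range t, b u ω := Finset.sum_nonneg fun u _ => hb u ω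
      exact max_le (by linarith) (by linarith [hb t ω])

lemma sqQueue_measurable (s : ℤ) {b : ℕ → Ω → ℝ} (hb : ∀ u, Measurable (b u)) (t : ℕ) :
    Measurable (sqQueue s b t) := by
  induction t with
  | zero => simpa [sqQueue] using measurable_const
  | succ t ih =>
      simp only [sqQueue]
      exact ((ih.add (hb t)).sub measurable_const).max measurable_const

lemma sqQueue_dep (s : ℤ) (b : ℕ → Ω → ℝ) (t : ℕ) :
    ∃ F : (Fin t → ℝ) → ℝ, Measurable F ∧ ∀ ω, sqQueue s b t ω = F (fun u => b u ω) := by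
  induction t with
  | zero => exact ⟨fun _ => 0, measurable_const, fun ω => by simp [sqQueue]⟩
  | succ t ih =>
      obtain ⟨F, hF, hFeq⟩ := ih
      refine ⟨fun v => max (F (fun u => v u.castSucc) + v (Fin.last t) - (s:ℝ)) 0, ?_, ?_⟩
      · exact (((hF.comp (measurable_pi_lambda _ fun u => measurable_pi_apply _)).add
          (measurable_pi_apply _)).sub measurable_const).max measurable_const
      · intro ω
        simp only [sqQueue, hFeq ω]
        norm_num [Fin.coe_castSucc, Fin.val_last]

end SQ

section SQ2
variable {Ω : Type*} [MeasureSpace Ω] [IsProbabilityMeasure (ℙ : Measure Ω)]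
lemma sqQueue_indepFun (s : ℤ) {b : ℕ → Ω → ℝ} (hbm : ∀ u, Measurable (b u))
    (hb : iIndepFun b ℙ) (t : ℕ) :
    IndepFun (sqQueue s b t) (b t) ℙ := by
  obtain ⟨F, hF, hFeq⟩ := sqQueue_dep s b t
  have hdisj : Disjoint (Finset.range t) ({t} : Finset ℕ) := by
    simp only [Finset.disjoint_left, Finset.mem_range, Finset.mem_singleton]
    omega
  have h := hb.indepFun_finset (Finset.range t) {t} hdisj hbm
  have hGm : Measurable (fun v : ↥(Finset.range t) → ℝ =>
      F (fun u => v ⟨u.1, Finset.mem_range.mpr u.2⟩)) :=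
    hF.comp (measurable_pi_lambda _ fun u => measurable_pi_apply _)
  have hHm : Measurable (fun v : ↥({t} : Finset ℕ) → ℝ => v ⟨t, Finset.mem_singleton_self t⟩) :=
    measurable_pi_apply _
  have h2 := h.comp hGm hHm
  have e1 : ((fun v : ↥(Finset.range t) → ℝ => F (fun u => v ⟨u.1, Finset.mem_range.mpr u.2⟩)) ∘
      (fun ω (i : ↥(Finset.range t)) => b i ω)) = sqQueue s b t := by
    funext ω; simp [Function.comp, hFeq ω]
  have e2 : ((fun v : ↥({t} : Finset ℕ) → ℝ => v ⟨t, Finset.mem_singleton_self t⟩) ∘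
      (fun ω (i : ↥({t} : Finset ℕ)) => b i ω)) = b t := by
    funext ω; simp [Function.comp]
  rwa [e1, e2] at h2


end SQ2



section H
variable {Ω : Type*} [MeasureSpace Ω] [IsProbabilityMeasure (ℙ : Measure Ω)]

lemma integrable_of_bdd {f : Ω → ℝ} (hm : Measurable f) {C : ℝ} (hb : ∀ ω, |f ω| ≤ C) :
    Integrable f ℙ := by
  refine (integrable_const C).mono' hm.aestronglyMeasurable ?_
  exact Filter.Eventually.of_forall fun ω => by simpa using hb ω

lemma sq_max_le (x : ℝ) : (max x 0)^2 ≤ x^2 := by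
  rcases le_or_gt x 0 with h | h
  · rw [max_eq_right h]; simpa using sq_nonneg x
  · rw [max_eq_left h.le]

lemma sq_max_ge {x c : ℝ} (hc : 0 ≤ c) (h : -c ≤ x) : x^2 - c^2 ≤ (max x 0)^2 := by
  rcases le_or_gt x 0 with h0 | h0
  · rw [max_eq_right h0]; nlinarith
  · rw [max_eq_left h0.le]; nlinarith

lemma telescope_up (v w : ℕ → ℝ) (c K : ℝ)
    (hstep : ∀ t, v (t+1) + c * w t ≤ v t + K) :
    ∀ T : ℕ, v T + c * ∑ t ∈ range T, w t ≤ v 0 + T * K := by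
  intro T
  induction T with
  | zero => simp
  | succ T ih =>
      rw [Finset.sum_range_succ]
      have h := hstep T
      have e : c * (∑ t ∈ range T, w t + w T) = c * ∑ t ∈ range T, w t + c * w T := mul_add c _ _
      push_cast
      linarith

lemma telescope_lo (v g : ℕ → ℝ) (K : ℝ)
    (hstep : ∀ t, v t + K ≤ v (t+1) + g t) :
    ∀ T : ℕ, v 0 + T * K ≤ v T + ∑ t ∈ range T, g t := by
  intro T
  induction T with
  | zero => simp
  | succ T ih =>
      rw [Finset.sum_range_succ]
      have h := hstep T
      push_cast
      linarith

lemma expand_sq {X Y : Ω → ℝ} (hXm : Measurable X) (hYm : Measurable Y) {CX CY : ℝ}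
    (hbX : ∀ ω, |X ω| ≤ CX) (hbY : ∀ ω, |Y ω| ≤ CY) (hind : IndepFun X Y ℙ) :
    ∫ ω, (X ω + Y ω)^2 = (∫ ω, (X ω)^2) + 2 * (∫ ω, X ω) * (∫ ω, Y ω) + ∫ ω, (Y ω)^2 := by
  have hX2 : Integrable (fun ω => (X ω)^2) ℙ := by
    refine integrable_of_bdd (hXm.pow_const 2) (C := CX^2) fun ω => ?_
    rw [abs_pow]; exact pow_le_pow_left₀ (abs_nonneg _) (hbX ω) 2
  have hY2 : Integrable (fun ω => (Y ω)^2) ℙ := by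
    refine integrable_of_bdd (hYm.pow_const 2) (C := CY^2) fun ω => ?_
    rw [abs_pow]; exact pow_le_pow_left₀ (abs_nonneg _) (hbY ω) 2
  have hXY : Integrable (fun ω => X ω * Y ω) ℙ := by
    refine integrable_of_bdd (hXm.mul hYm) (C := CX * CY) fun ω => ?_
    rw [abs_mul]
    exact mul_le_mul (hbX ω) (hbY ω) (abs_nonneg _) ((abs_nonneg _).trans (hbX ω))
  have hmul : ∫ ω, X ω * Y ω = (∫ ω, X ω) * (∫ ω, Y ω) :=
    hind.integral_fun_mul_eq_mul_integral hXm.aestronglyMeasurable hYm.aestronglyMeasurable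
  have e : ∀ ω, (X ω + Y ω)^2 = (X ω)^2 + 2 * (X ω * Y ω) + (Y ω)^2 := fun ω => by ring
  have i2 : Integrable (fun ω => 2 * (X ω * Y ω)) ℙ := hXY.const_mul 2
  have i1 : Integrable (fun ω => (X ω)^2 + 2 * (X ω * Y ω)) ℙ := hX2.add i2
  rw [integral_congr_ae (Filter.Eventually.of_forall e), integral_add i1 hY2,
    integral_add hX2 i2, MeasureTheory.integral_const_mul, hmul]
  ring

lemma dyadic_sum_aux (M₀ : ℝ) (hM₀ : 0 ≤ M₀) : ∀ J : ℕ,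
    ∑ j ∈ Finset.Icc 1 J, (2:ℝ)^j * M₀ ≤ 2^(J+1) * M₀ := by
  intro J
  induction J with
  | zero => simp; positivity
  | succ J ih =>
      rw [Finset.sum_Icc_succ_top (by omega)]
      have e : (2:ℝ)^(J+1+1) * M₀ = 2^(J+1) * M₀ + 2^(J+1) * M₀ := by ring
      linarith

lemma dyadic_sum (Qv : ℝ) (hQ : 0 ≤ Qv) (M₀ : ℝ) (hM₀ : 0 < M₀) (J : ℕ) :
    ∑ j ∈ Finset.Icc 1 J, (if (2:ℝ)^j * M₀ ≤ 2*Qv then (2:ℝ)^j * M₀ else 0) ≤ 4 * Qv := by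
  induction J with
  | zero => simp; linarith
  | succ J ih =>
      rw [Finset.sum_Icc_succ_top (by omega)]
      by_cases h : (2:ℝ)^(J+1) * M₀ ≤ 2*Qv
      · rw [if_pos h]
        have hle : ∑ j ∈ Finset.Icc 1 J, (if (2:ℝ)^j * M₀ ≤ 2*Qv then (2:ℝ)^j * M₀ else 0)
            ≤ ∑ j ∈ Finset.Icc 1 J, (2:ℝ)^j * M₀ := by
          refine Finset.sum_le_sum fun j _ => ?_
          split
          · exact le_rfl
          · positivity
        have haux := dyadic_sum_aux M₀ hM₀.le J
        linarith
      · rw [if_neg h]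
        simpa using ih

end H



section H2
variable {Ω : Type*} [MeasureSpace Ω] [IsProbabilityMeasure (ℙ : Measure Ω)]

lemma integrable_of_bdd' {f : Ω → ℝ} (hm : Measurable f) {C : ℝ} (hb : ∀ ω, |f ω| ≤ C) :
    Integrable f ℙ := by
  refine (integrable_const C).mono' hm.aestronglyMeasurable ?_
  exact Filter.Eventually.of_forall fun ω => by simpa using hb ω

/-- If the second moment is not finite, truncated second moments are unbounded. -/
lemma exists_large_trunc {f : Ω → ℝ} (hm : Measurable f) (h0 : ∀ ω, 0 ≤ f ω)
    (hnat : ∀ ω, ∃ n : ℕ, f ω = n)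
    (hni : ¬ Integrable (fun ω => (f ω)^2) ℙ) (D : ℝ) :
    ∃ A : ℕ, D ≤ ∫ ω, (min (f ω) A)^2 := by
  by_contra hcon
  push_neg at hcon
  apply hni
  have hmono : Monotone (fun (A : ℕ) (ω : Ω) => ENNReal.ofReal ((min (f ω) A)^2)) := by
    intro A B hAB
    intro ω
    apply ENNReal.ofReal_le_ofReal
    have h1 : min (f ω) A ≤ min (f ω) B :=
      min_le_min le_rfl (by exact_mod_cast Nat.cast_le.mpr hAB)
    have h2 : 0 ≤ min (f ω) A := le_min (h0 ω) (Nat.cast_nonneg A)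
    exact pow_le_pow_left₀ h2 h1 2
  have hsup : ∀ ω, ⨆ A : ℕ, ENNReal.ofReal ((min (f ω) (A:ℝ))^2) = ENNReal.ofReal ((f ω)^2) := by
    intro ω
    apply le_antisymm
    · refine iSup_le fun A => ENNReal.ofReal_le_ofReal ?_
      exact pow_le_pow_left₀ (le_min (h0 ω) (Nat.cast_nonneg A)) (min_le_left _ _) 2
    · obtain ⟨n, hn⟩ := hnat ω
      refine le_iSup_of_le n (le_of_eq ?_)
      congr 1
      rw [min_eq_left (by rw [hn])]
  have hmeasA : ∀ A : ℕ, Measurable (fun ω => ENNReal.ofReal ((min (f ω) (A:ℝ))^2)) := by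
    intro A
    exact ((hm.min measurable_const).pow_const 2).ennreal_ofReal
  have hkey : ∫⁻ ω, ENNReal.ofReal ((f ω)^2) ∂ℙ ≤ ENNReal.ofReal D := by
    have := lintegral_iSup (μ := ℙ) hmeasA hmono
    calc ∫⁻ ω, ENNReal.ofReal ((f ω)^2) ∂ℙ
        = ∫⁻ ω, ⨆ A : ℕ, ENNReal.ofReal ((min (f ω) (A:ℝ))^2) ∂ℙ := by
          refine lintegral_congr fun ω => (hsup ω).symm
      _ = ⨆ A : ℕ, ∫⁻ ω, ENNReal.ofReal ((min (f ω) (A:ℝ))^2) ∂ℙ := this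
      _ ≤ ENNReal.ofReal D := by
          refine iSup_le fun A => ?_
          have hint : Integrable (fun ω => (min (f ω) (A:ℝ))^2) ℙ := by
            refine integrable_of_bdd' ((hm.min measurable_const).pow_const 2) (C := (A:ℝ)^2) ?_
            intro ω
            rw [abs_pow, abs_of_nonneg (le_min (h0 ω) (Nat.cast_nonneg A))]
            exact pow_le_pow_left₀ (le_min (h0 ω) (Nat.cast_nonneg A)) (min_le_right _ _) 2
          rw [← ofReal_integral_eq_lintegral_ofReal hint
            (Filter.Eventually.of_forall fun ω => sq_nonneg _)]
          exact ENNReal.ofReal_le_ofReal (hcon A).le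
  refine ⟨(hm.pow_const 2).aestronglyMeasurable, ?_⟩
  rw [hasFiniteIntegral_iff_ofReal (Filter.Eventually.of_forall fun ω => sq_nonneg _)]
  exact lt_of_le_of_lt hkey ENNReal.ofReal_lt_top

/-- real limsup of a sequence that is not bounded above is 0 (junk value). -/
lemma limsup_of_not_bdd {u : ℕ → ℝ} (h : ¬ IsBoundedUnder (· ≤ ·) atTop u) :
    limsup u atTop = 0 := by
  rw [Filter.limsup_eq]
  convert Real.sInf_empty
  · rfl
  rw [Set.eq_empty_iff_forall_notMem]
  intro x hx
  exact h ⟨x, hx⟩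

end H2



section H3
variable {Ω : Type*} [MeasureSpace Ω] [IsProbabilityMeasure (ℙ : Measure Ω)]
variable {a : ℕ → Ω → ℝ} {s : ℤ}

/-- pointwise overflow bound -/
lemma e_le {A M q bv sv : ℝ} (hA : 0 ≤ A) (h2A : 2*A ≤ M) (hs0 : 0 ≤ sv)
    (hq : 0 ≤ q) (hb : 0 ≤ bv) (hbA : bv ≤ A) :
    (max (min q M + bv - sv) 0)^2 - (min (max (min q M + bv - sv) 0) M)^2
      ≤ 3*A*(if M ≤ 2*q then M else 0) := by
  have hM0 : 0 ≤ M := by linarith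
  set R := min q M with hR
  have hR0 : 0 ≤ R := le_min hq hM0
  have hRM : R ≤ M := min_le_right _ _
  set x := R + bv - sv with hx
  by_cases hcase : max x 0 ≤ M
  · rw [min_eq_left hcase]
    have h0 : (0:ℝ) ≤ if M ≤ 2*q then M else 0 := by split; exacts [hM0, le_rfl]
    nlinarith [h0, hA]
  · push_neg at hcase
    have hxM : M < x := by
      rcases le_or_gt x 0 with h | h
      · rw [max_eq_right h] at hcase; linarith
      · rwa [max_eq_left h.le] at hcase
    have hmx : max x 0 = x := max_eq_left (by linarith)
    rw [hmx, min_eq_right (by linarith)]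
    have hqbig : M ≤ 2*q := by
      have hRbig : M - A < R := by simp only [hx] at hxM; linarith
      have : R ≤ q := min_le_left _ _
      linarith
    rw [if_pos hqbig]
    have hxle : x ≤ M + A := by simp only [hx]; linarith
    nlinarith
end H3



section H4
variable {Ω : Type*} [MeasureSpace Ω] [IsProbabilityMeasure (ℙ : Measure Ω)]
variable {a : ℕ → Ω → ℝ} {s : ℤ} {A ε : ℝ}

/-- Common setup facts for the capped queue. -/
structure CappedSetup (a : ℕ → Ω → ℝ) (s : ℤ) (A : ℝ) : Prop where
  hA : 0 ≤ A
  hs0 : (0:ℝ) ≤ s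
  hmeas : ∀ t, Measurable (a t)
  hnonneg : ∀ t ω, 0 ≤ a t ω
  hindep : iIndepFun a ℙ
  hident : ∀ t, IdentDistrib (a t) (a 0) ℙ ℙ

namespace CappedSetup

variable (hS : CappedSetup a s A)

noncomputable def b (_ : CappedSetup a s A) : ℕ → Ω → ℝ := fun u ω => min (a u ω) A

lemma hbm : ∀ u, Measurable (hS.b u) := fun u => (hS.hmeas u).min measurable_const

lemma hbnn : ∀ u ω, 0 ≤ hS.b u ω := fun u ω => le_min (hS.hnonneg u ω) hS.hA

lemma hbA : ∀ u ω, hS.b u ω ≤ A := fun u ω => min_le_right _ _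

lemma hbind : iIndepFun hS.b ℙ :=
  hS.hindep.comp (fun _ x => min x A) (fun _ => measurable_id.min measurable_const)

lemma hbid (t : ℕ) : IdentDistrib (hS.b t) (hS.b 0) ℙ ℙ :=
  (hS.hident t).comp (measurable_id.min measurable_const)

lemma hQm (t : ℕ) : Measurable (sqQueue s hS.b t) := sqQueue_measurable s hS.hbm t

lemma hQbd (t : ℕ) (ω : Ω) : |sqQueue s hS.b t ω| ≤ t * A := by
  rw [abs_of_nonneg (sqQueue_nonneg s hS.b t ω)]
  calc sqQueue s hS.b t ω ≤ ∑ u ∈ range t, hS.b u ω :=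
        sqQueue_le_sum s hS.hs0 hS.hbnn t ω
    _ ≤ ∑ u ∈ range t, A := Finset.sum_le_sum fun u _ => hS.hbA u ω
    _ = t * A := by simp [mul_comm]

lemma hQint (t : ℕ) : Integrable (sqQueue s hS.b t) ℙ :=
  integrable_of_bdd (hS.hQm t) (hS.hQbd t)

lemma hYm (t : ℕ) : Measurable (fun ω => hS.b t ω - (s:ℝ)) :=
  (hS.hbm t).sub measurable_const

lemma hYbd (t : ℕ) (ω : Ω) : |hS.b t ω - (s:ℝ)| ≤ A + s := by
  rw [abs_le]
  constructor
  · have := hS.hbnn t ω; linarith [hS.hA]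
  · have := hS.hbA t ω; linarith [hS.hs0]

lemma hind (t : ℕ) : IndepFun (sqQueue s hS.b t) (fun ω => hS.b t ω - (s:ℝ)) ℙ := by
  have base := sqQueue_indepFun s hS.hbm hS.hbind t
  have h := base.comp measurable_id (measurable_id.sub (measurable_const (a := (s:ℝ))))
  exact h

lemma hbint (t : ℕ) : Integrable (hS.b t) ℙ :=
  integrable_of_bdd (hS.hbm t) (fun ω => by
    rw [abs_of_nonneg (hS.hbnn t ω)]; exact hS.hbA t ω)

lemma hβeq (t : ℕ) : ∫ ω, (hS.b t ω - (s:ℝ)) = (∫ ω, min (a 0 ω) A) - (s:ℝ) := by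
  rw [integral_sub (hS.hbint t) (integrable_const _), (hS.hbid t).integral_eq, integral_const]
  simp [CappedSetup.b, measure_univ]

lemma hKeq (t : ℕ) : ∫ ω, (hS.b t ω - (s:ℝ))^2 = ∫ ω, (min (a 0 ω) A - (s:ℝ))^2 := by
  have h := ((hS.hident t).comp (u := fun x : ℝ => (min x A - (s:ℝ))^2)
    (((measurable_id.min measurable_const).sub measurable_const).pow_const 2)).integral_eq
  exact h

/-- One-step drift upper bound. -/
lemma drift_up (hβ : (∫ ω, min (a 0 ω) A) - (s:ℝ) ≤ -ε) (t : ℕ) :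
    (∫ ω, (sqQueue s hS.b (t+1) ω)^2) + 2*ε*(∫ ω, sqQueue s hS.b t ω)
      ≤ (∫ ω, (sqQueue s hS.b t ω)^2) + ∫ ω, (min (a 0 ω) A - (s:ℝ))^2 := by
  have key : ∫ ω, (sqQueue s hS.b (t+1) ω)^2
      ≤ ∫ ω, (sqQueue s hS.b t ω + (hS.b t ω - (s:ℝ)))^2 := by
    refine integral_mono ?_ ?_ ?_
    · refine integrable_of_bdd ((hS.hQm (t+1)).pow_const 2) (C := ((t+1)*A)^2) fun ω => ?_
      rw [abs_pow]
      exact pow_le_pow_left₀ (abs_nonneg _)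
        ((hS.hQbd (t+1) ω).trans_eq (by push_cast; ring)) 2
    · refine integrable_of_bdd (((hS.hQm t).add (hS.hYm t)).pow_const 2)
        (C := (t*A + (A + s))^2) fun ω => ?_
      rw [abs_pow]
      refine pow_le_pow_left₀ (abs_nonneg _) ((abs_add_le _ _).trans ?_) 2
      exact add_le_add (hS.hQbd t ω) (hS.hYbd t ω)
    · intro ω
      have e : sqQueue s hS.b t ω + hS.b t ω - (s:ℝ)
          = sqQueue s hS.b t ω + (hS.b t ω - (s:ℝ)) := by ring
      show (sqQueue s hS.b (t+1) ω)^2 ≤ _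
      simp only [sqQueue, e]
      exact sq_max_le _
  have hexp := expand_sq (hS.hQm t) (hS.hYm t) (hS.hQbd t) (hS.hYbd t) (hS.hind t)
  have hQnn : 0 ≤ ∫ ω, sqQueue s hS.b t ω :=
    integral_nonneg fun ω => sqQueue_nonneg s hS.b t ω
  have hcross : 2 * (∫ ω, sqQueue s hS.b t ω) * (∫ ω, (hS.b t ω - (s:ℝ)))
      ≤ 2 * (∫ ω, sqQueue s hS.b t ω) * (-ε) := by
    apply mul_le_mul_of_nonneg_left _ (by linarith)
    rw [hS.hβeq t]; exact hβ
  rw [hS.hKeq t] at hexp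
  linarith [key, hexp]

/-- Capped time-averaged bound. -/
lemma capped_bound (hβ : (∫ ω, min (a 0 ω) A) - (s:ℝ) ≤ -ε) (T : ℕ) :
    2*ε * ∑ t ∈ range T, ∫ ω, sqQueue s hS.b t ω
      ≤ T * ∫ ω, (min (a 0 ω) A - (s:ℝ))^2 := by
  have htel := telescope_up (fun t => ∫ ω, (sqQueue s hS.b t ω)^2)
    (fun t => ∫ ω, sqQueue s hS.b t ω) (2*ε) (∫ ω, (min (a 0 ω) A - (s:ℝ))^2)
    (fun t => hS.drift_up hβ t) T
  have h0 : ∫ ω, (sqQueue s hS.b 0 ω)^2 = 0 := by simp [sqQueue]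
  have hTnn : 0 ≤ ∫ ω, (sqQueue s hS.b T ω)^2 := integral_nonneg fun ω => sq_nonneg _
  rw [h0] at htel
  linarith

end CappedSetup
end H4



section H5
variable {Ω : Type*} [MeasureSpace Ω] [IsProbabilityMeasure (ℙ : Measure Ω)]
variable {a : ℕ → Ω → ℝ} {s : ℤ} {A ε : ℝ}

namespace CappedSetup

/-- overflow excess of the truncated Lyapunov function -/
noncomputable def eF (hS : CappedSetup a s A) (t : ℕ) (M : ℝ) : Ω → ℝ := fun ω =>
  (max (min (sqQueue s hS.b t ω) M + hS.b t ω - (s:ℝ)) 0)^2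
    - (min (max (min (sqQueue s hS.b t ω) M + hS.b t ω - (s:ℝ)) 0) M)^2

lemma hMnn (hS : CappedSetup a s A) {M : ℝ} (hM : 2*A ≤ M) : (0:ℝ) ≤ M := by
  linarith [hS.hA]

variable (hS : CappedSetup a s A) {M : ℝ}

lemma eF_meas (t : ℕ) : Measurable (hS.eF t M) := by
  unfold eF
  have h1 : Measurable (fun ω => min (sqQueue s hS.b t ω) M + hS.b t ω - (s:ℝ)) :=
    (((hS.hQm t).min measurable_const).add (hS.hbm t)).sub measurable_const
  exact ((h1.max measurable_const).pow_const 2).sub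
    (((h1.max measurable_const).min measurable_const).pow_const 2)

lemma eF_nonneg (hM : 2*A ≤ M) (t : ℕ) (ω : Ω) : 0 ≤ hS.eF t M ω := by
  unfold eF
  set x := min (sqQueue s hS.b t ω) M + hS.b t ω - (s:ℝ)
  have h1 : 0 ≤ max x 0 := le_max_right _ _
  have h2 : min (max x 0) M ≤ max x 0 := min_le_left _ _
  have h3 : 0 ≤ min (max x 0) M := le_min h1 (hS.hMnn hM)
  nlinarith

lemma eF_bdd (hM : 2*A ≤ M) (t : ℕ) (ω : Ω) : |hS.eF t M ω| ≤ (M + A)^2 := by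
  rw [abs_of_nonneg (hS.eF_nonneg hM t ω)]
  unfold eF
  have hMn : (0:ℝ) ≤ M := hS.hMnn hM
  set x := min (sqQueue s hS.b t ω) M + hS.b t ω - (s:ℝ) with hx
  have h1 : max x 0 ≤ M + A := by
    have hA1 := hS.hbA t ω
    have h2 : min (sqQueue s hS.b t ω) M ≤ M := min_le_right _ _
    have h3 := hS.hs0
    have h4 := hS.hA
    apply max_le _ (by linarith)
    simp only [hx]; linarith
  have h3 : 0 ≤ min (max x 0) M := le_min (le_max_right _ _) hMn
  nlinarith [le_max_right x 0, sq_nonneg (min (max x 0) M)]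

lemma eF_key (hM : 2*A ≤ M) (t : ℕ) (ω : Ω) :
    hS.eF t M ω ≤ 3*A*(if M ≤ 2 * sqQueue s hS.b t ω then M else 0) :=
  e_le hS.hA hM hS.hs0 (sqQueue_nonneg s hS.b t ω) (hS.hbnn t ω) (hS.hbA t ω)

lemma eF_int (hM : 2*A ≤ M) (t : ℕ) : Integrable (hS.eF t M) ℙ :=
  integrable_of_bdd (hS.eF_meas t) (hS.eF_bdd hM t)

lemma Rint (hM : 2*A ≤ M) (t : ℕ) : Integrable (fun ω => min (sqQueue s hS.b t ω) M) ℙ :=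
  integrable_of_bdd ((hS.hQm t).min measurable_const) (fun ω => by
    rw [abs_of_nonneg (le_min (sqQueue_nonneg s hS.b t ω) (hS.hMnn hM))]
    exact min_le_right _ _)

lemma R2int (hM : 2*A ≤ M) (t : ℕ) :
    Integrable (fun ω => (min (sqQueue s hS.b t ω) M)^2) ℙ := by
  refine integrable_of_bdd (((hS.hQm t).min measurable_const).pow_const 2) (C := M^2) fun ω => ?_
  rw [abs_pow, abs_of_nonneg (le_min (sqQueue_nonneg s hS.b t ω) (hS.hMnn hM))]
  exact pow_le_pow_left₀ (le_min (sqQueue_nonneg s hS.b t ω) (hS.hMnn hM)) (min_le_right _ _) 2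

/-- One-step drift lower bound for the truncated Lyapunov function. -/
lemma drift_lo (hM : 2*A ≤ M) (t : ℕ) :
    (∫ ω, (min (sqQueue s hS.b t ω) M)^2)
      + ((∫ ω, (min (a 0 ω) A - (s:ℝ))^2) - (s:ℝ)^2)
    ≤ (∫ ω, (min (sqQueue s hS.b (t+1) ω) M)^2)
      + (2*(s:ℝ)*(∫ ω, min (sqQueue s hS.b t ω) M) + ∫ ω, hS.eF t M ω) := by
  have hMn : (0:ℝ) ≤ M := hS.hMnn hM
  have hRm : Measurable (fun ω => min (sqQueue s hS.b t ω) M) :=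
    (hS.hQm t).min measurable_const
  have hRbd : ∀ ω, |min (sqQueue s hS.b t ω) M| ≤ M := fun ω => by
    rw [abs_of_nonneg (le_min (sqQueue_nonneg s hS.b t ω) hMn)]
    exact min_le_right _ _
  have hindR : IndepFun (fun ω => min (sqQueue s hS.b t ω) M)
      (fun ω => hS.b t ω - (s:ℝ)) ℙ := by
    have h := (sqQueue_indepFun s hS.hbm hS.hbind t).comp
      (measurable_id.min (measurable_const (a := M)))
      (measurable_id.sub (measurable_const (a := (s:ℝ))))
    exact h
  have hexp := expand_sq hRm (hS.hYm t) hRbd (hS.hYbd t) hindR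
  rw [hS.hKeq t] at hexp
  have hpt : ∀ ω, (min (sqQueue s hS.b t ω) M + (hS.b t ω - (s:ℝ)))^2 - (s:ℝ)^2
      - hS.eF t M ω ≤ (min (sqQueue s hS.b (t+1) ω) M)^2 := by
    intro ω
    set R := min (sqQueue s hS.b t ω) M with hR
    set x := R + hS.b t ω - (s:ℝ) with hx
    have hxge : -(s:ℝ) ≤ x := by
      have h1 : 0 ≤ R := le_min (sqQueue_nonneg s hS.b t ω) hMn
      have h2 := hS.hbnn t ω
      simp only [hx]; linarith
    have h1 : x^2 - (s:ℝ)^2 ≤ (max x 0)^2 := sq_max_ge hS.hs0 hxge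
    have h2 : hS.eF t M ω = (max x 0)^2 - (min (max x 0) M)^2 := rfl
    have h3 : min (max x 0) M ≤ min (sqQueue s hS.b (t+1) ω) M := by
      refine min_le_min ?_ le_rfl
      show max x 0 ≤ sqQueue s hS.b (t+1) ω
      have hQR : R ≤ sqQueue s hS.b t ω := min_le_left _ _
      have hxle : x ≤ sqQueue s hS.b t ω + hS.b t ω - (s:ℝ) := by simp only [hx]; linarith
      simp only [sqQueue]
      exact max_le_max hxle le_rfl
    have h4 : 0 ≤ min (max x 0) M := le_min (le_max_right _ _) hMn
    have h5 : (min (max x 0) M)^2 ≤ (min (sqQueue s hS.b (t+1) ω) M)^2 :=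
      pow_le_pow_left₀ h4 h3 2
    have hxe : x = R + (hS.b t ω - (s:ℝ)) := by simp only [hx]; ring
    rw [← hxe]
    linarith
  have iA : Integrable (fun ω =>
      (min (sqQueue s hS.b t ω) M + (hS.b t ω - (s:ℝ)))^2) ℙ := by
    refine integrable_of_bdd ((hRm.add (hS.hYm t)).pow_const 2) (C := (M + (A + s))^2) fun ω => ?_
    rw [abs_pow]
    refine pow_le_pow_left₀ (abs_nonneg _) ((abs_add_le _ _).trans ?_) 2
    exact add_le_add (hRbd ω) (hS.hYbd t ω)
  have iB : Integrable (fun ω =>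
      (min (sqQueue s hS.b t ω) M + (hS.b t ω - (s:ℝ)))^2 - (s:ℝ)^2) ℙ :=
    iA.sub (integrable_const _)
  have hint1 : Integrable (fun ω =>
      (min (sqQueue s hS.b t ω) M + (hS.b t ω - (s:ℝ)))^2 - (s:ℝ)^2 - hS.eF t M ω) ℙ :=
    iB.sub (hS.eF_int hM t)
  have hmono := integral_mono hint1 (hS.R2int hM (t+1)) hpt
  rw [integral_sub iB (hS.eF_int hM t), integral_sub iA (integrable_const _),
    hexp, integral_const] at hmono
  simp only [measure_univ, probReal_univ, ENNReal.toReal_one, smul_eq_mul, one_mul] at hmono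
  have hRnn : 0 ≤ ∫ ω, min (sqQueue s hS.b t ω) M :=
    integral_nonneg fun ω => le_min (sqQueue_nonneg s hS.b t ω) hMn
  have hYge : -(s:ℝ) ≤ ∫ ω, (hS.b t ω - (s:ℝ)) := by
    rw [hS.hβeq t]
    have : 0 ≤ ∫ ω, min (a 0 ω) A :=
      integral_nonneg fun ω => le_min (hS.hnonneg 0 ω) hS.hA
    linarith
  have hcross : 2 * (∫ ω, min (sqQueue s hS.b t ω) M) * (-(s:ℝ))
      ≤ 2 * (∫ ω, min (sqQueue s hS.b t ω) M) * (∫ ω, (hS.b t ω - (s:ℝ))) :=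
    mul_le_mul_of_nonneg_left hYge (by linarith)
  linarith

/-- Telescoped lower bound. -/
lemma capped_lower (hM : 2*A ≤ M) (T : ℕ) :
    (T:ℝ) * ∫ ω, (min (a 0 ω) A - (s:ℝ))^2
      ≤ M^2 + T*(s:ℝ)^2 + 2*(s:ℝ) * ∑ t ∈ range T, (∫ ω, sqQueue s hS.b t ω)
        + ∑ t ∈ range T, ∫ ω, hS.eF t M ω := by
  have hMn : (0:ℝ) ≤ M := hS.hMnn hM
  have htel := telescope_lo (fun t => ∫ ω, (min (sqQueue s hS.b t ω) M)^2)
    (fun t => 2*(s:ℝ)*(∫ ω, min (sqQueue s hS.b t ω) M) + ∫ ω, hS.eF t M ω)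
    ((∫ ω, (min (a 0 ω) A - (s:ℝ))^2) - (s:ℝ)^2)
    (fun t => hS.drift_lo hM t) T
  have h0 : ∫ ω, (min (sqQueue s hS.b 0 ω) M)^2 = 0 := by
    have he : ∀ ω : Ω, (min (sqQueue s hS.b 0 ω) M)^2 = 0 := fun ω => by
      simp [sqQueue, min_eq_left hMn]
    rw [integral_congr_ae (Filter.Eventually.of_forall he)]
    simp
  have hvT : ∫ ω, (min (sqQueue s hS.b T ω) M)^2 ≤ M^2 := by
    calc ∫ ω, (min (sqQueue s hS.b T ω) M)^2 ≤ ∫ _ω : Ω, M^2 := by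
          refine integral_mono (hS.R2int hM T) (integrable_const _) fun ω => ?_
          have h4 : 0 ≤ min (sqQueue s hS.b T ω) M :=
            le_min (sqQueue_nonneg s hS.b T ω) hMn
          exact pow_le_pow_left₀ h4 (min_le_right _ _) 2
      _ = M^2 := by simp [measure_univ]
  have hsum : ∑ t ∈ range T, (2*(s:ℝ)*(∫ ω, min (sqQueue s hS.b t ω) M) + ∫ ω, hS.eF t M ω)
      ≤ 2*(s:ℝ) * ∑ t ∈ range T, (∫ ω, sqQueue s hS.b t ω)
        + ∑ t ∈ range T, ∫ ω, hS.eF t M ω := by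
    rw [Finset.sum_add_distrib, Finset.mul_sum]
    refine add_le_add (Finset.sum_le_sum fun t _ => ?_) le_rfl
    refine mul_le_mul_of_nonneg_left ?_ (by linarith [hS.hs0])
    exact integral_mono (hS.Rint hM t) (hS.hQint t) fun ω => min_le_left _ _
  have hexpand : (T:ℝ)*((∫ ω, (min (a 0 ω) A - (s:ℝ))^2) - (s:ℝ)^2)
      = (T:ℝ) * (∫ ω, (min (a 0 ω) A - (s:ℝ))^2) - T*(s:ℝ)^2 := by ring
  rw [h0, hexpand] at htel
  linarith

end CappedSetup
end H5

open Topology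


/-- Stability of a single discrete-time queue `Q(t+1) = max(Q(t) + a(t) − s, 0)`
with i.i.d. nonnegative integer arrivals of mean `π ≤ s − ε` and second
moment at most `σ²`: the time-averaged expected queue length satisfies
`limsup_T (1/T) Σ_{t<T} E[Q(t)] ≤ (σ² + s²)/(2ε)`. -/
theorem single_queue_stability
    {Ω : Type*} [MeasureSpace Ω] [IsProbabilityMeasure (ℙ : Measure Ω)]
    (a : ℕ → Ω → ℝ) (Q : ℕ → Ω → ℝ) (s : ℤ) (π ε σ2 : ℝ)
    (hmeas : ∀ t, Measurable (a t))
    (hnonneg : ∀ t ω, 0 ≤ a t ω)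
    (hint : ∀ t ω, ∃ n : ℕ, a t ω = n)
    (hindep : iIndepFun a ℙ)
    (hident : ∀ t, IdentDistrib (a t) (a 0) ℙ ℙ)
    (hmean : ∫ ω, a 0 ω = π)
    (hsecond : ∫ ω, (a 0 ω) ^ 2 ≤ σ2)
    (hε : 0 < ε)
    (hrate : π ≤ (s : ℝ) - ε)
    (hQ0 : ∀ ω, Q 0 ω = 0)
    (hQrec : ∀ t ω, Q (t + 1) ω = max (Q t ω + a t ω - (s : ℝ)) 0) :
    limsup (fun T : ℕ => (1 / (T : ℝ)) * ∑ t ∈ range T, ∫ ω, Q t ω) atTop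
      ≤ (σ2 + (s : ℝ) ^ 2) / (2 * ε) := by
  -- identify Q with the canonical queue
  have hQeq : ∀ t, ∀ ω, Q t ω = sqQueue s a t ω := by
    intro t
    induction t with
    | zero => intro ω; simp [sqQueue, hQ0]
    | succ t ih => intro ω; rw [hQrec]; simp only [sqQueue, ih ω]
  have hQInt_eq : ∀ t, (∫ ω, Q t ω) = ∫ ω, sqQueue s a t ω := fun t =>
    integral_congr_ae (Filter.Eventually.of_forall (hQeq t))
  simp only [hQInt_eq]
  -- nonnegativity of the target bound
  have hann : 0 ≤ ∫ ω, (a 0 ω)^2 := integral_nonneg fun ω => sq_nonneg _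
  have hσ2 : 0 ≤ σ2 := le_trans hann hsecond
  have hRHS0 : 0 ≤ (σ2 + (s:ℝ)^2) / (2*ε) := by positivity
  by_cases hai : Integrable (a 0) ℙ
  swap
  · -- Case 1 : arrivals not integrable, all integrals are junk 0
    have hz : ∀ t, ∫ ω, sqQueue s a t ω = 0 := by
      intro t
      cases t with
      | zero => simp [sqQueue]
      | succ t =>
          refine integral_undef fun h => hai ?_
          have hbound : ∀ ω, ‖a t ω‖ ≤ sqQueue s a (t+1) ω + (s:ℝ) := by
            intro ω
            rw [Real.norm_eq_abs, abs_of_nonneg (hnonneg t ω)]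
            have h1 : sqQueue s a t ω + a t ω - (s:ℝ) ≤ sqQueue s a (t+1) ω := by
              simp only [sqQueue]; exact le_max_left _ _
            have h2 := sqQueue_nonneg s a t ω
            linarith
          have hat : Integrable (a t) ℙ :=
            (h.add (integrable_const ((s:ℝ)))).mono' (hmeas t).aestronglyMeasurable
              (Filter.Eventually.of_forall hbound)
          exact (hident t).integrable_iff.mp hat
    have he : (fun T : ℕ => (1 / (T : ℝ)) * ∑ t ∈ range T, ∫ ω, sqQueue s a t ω)
        = fun _ => (0:ℝ) := by
      funext T
      simp [hz]
    rw [he, limsup_const]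
    exact hRHS0
  -- Case 2 : integrable arrivals
  have hπ0 : 0 ≤ π := hmean ▸ integral_nonneg fun ω => hnonneg 0 ω
  have hs0 : (0:ℝ) ≤ (s:ℝ) := by linarith
  -- setup for any cap A
  have hSetup : ∀ A : ℝ, 0 ≤ A → CappedSetup a s A := fun A hA =>
    ⟨hA, hs0, hmeas, hnonneg, hindep, hident⟩
  have hβ : ∀ (A : ℝ) (hA : 0 ≤ A), (∫ ω, min (a 0 ω) A) - (s:ℝ) ≤ -ε := by
    intro A hA
    have h1 : (∫ ω, min (a 0 ω) A) ≤ ∫ ω, a 0 ω :=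
      integral_mono ((hSetup A hA).hbint 0) hai fun ω => min_le_left _ _
    rw [hmean] at h1
    linarith
  -- integrability of the true queue
  have haint : ∀ u : ℕ, Integrable (a u) ℙ := fun u => (hident u).integrable_iff.mpr hai
  have hsumint : ∀ t : ℕ, Integrable (fun ω => ∑ u ∈ range t, a u ω) ℙ := fun t =>
    integrable_finset_sum _ fun u _ => haint u
  have hQint : ∀ t, Integrable (sqQueue s a t) ℙ := by
    intro t
    refine (hsumint t).mono' (sqQueue_measurable s hmeas t).aestronglyMeasurable
      (Filter.Eventually.of_forall fun ω => ?_)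
    rw [Real.norm_eq_abs, abs_of_nonneg (sqQueue_nonneg s a t ω)]
    exact sqQueue_le_sum s hs0 hnonneg t ω
  -- convergence of capped queues to the true queue
  have hconv : ∀ t, Tendsto (fun A : ℕ => ∫ ω, sqQueue s (hSetup A (Nat.cast_nonneg A)).b t ω)
      atTop (𝓝 (∫ ω, sqQueue s a t ω)) := by
    intro t
    refine tendsto_integral_of_dominated_convergence (fun ω => ∑ u ∈ range t, a u ω)
      (fun A => ((hSetup A (Nat.cast_nonneg A)).hQm t).aestronglyMeasurable)
      (hsumint t) (fun A => Filter.Eventually.of_forall fun ω => ?_)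
      (Filter.Eventually.of_forall fun ω => ?_)
    · rw [Real.norm_eq_abs, abs_of_nonneg (sqQueue_nonneg s _ t ω)]
      calc sqQueue s (hSetup (A:ℝ) (Nat.cast_nonneg A)).b t ω
          ≤ sqQueue s a t ω :=
            sqQueue_mono s (fun u ω' => min_le_left _ _) t ω
        _ ≤ ∑ u ∈ range t, a u ω := sqQueue_le_sum s hs0 hnonneg t ω
    · -- pointwise eventual constancy
      have hn : ∀ u : ℕ, ∃ n : ℕ, a u ω = n := fun u => hint u ω
      set N := (range t).sup fun u => Classical.choose (hn u) with hN
      apply tendsto_atTop_of_eventually_const (i₀ := N)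
      intro A hA
      apply sqQueue_congr
      intro u hu
      have hspec := Classical.choose_spec (hn u)
      have hle : Classical.choose (hn u) ≤ N := by
        rw [hN]
        exact Finset.le_sup (f := fun u => Classical.choose (hn u)) (Finset.mem_range.mpr hu)
      have : a u ω ≤ (A:ℝ) := by
        rw [hspec]
        exact_mod_cast hle.trans hA
      show min (a u ω) (A:ℝ) = a u ω
      exact min_eq_left this
  by_cases h2 : Integrable (fun ω => (a 0 ω)^2) ℙ
  · -- Case 2a : finite second moment
    have hKb : ∀ (A : ℝ) (hA : 0 ≤ A),
        (∫ ω, (min (a 0 ω) A - (s:ℝ))^2) ≤ σ2 + (s:ℝ)^2 := by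
      intro A hA
      have hintK : Integrable (fun ω => (min (a 0 ω) A - (s:ℝ))^2) ℙ := by
        refine integrable_of_bdd
          ((((hmeas 0).min measurable_const).sub measurable_const).pow_const 2)
          (C := (A + s)^2) fun ω => ?_
        rw [abs_pow]
        refine pow_le_pow_left₀ (abs_nonneg _) ?_ 2
        rw [abs_le]
        constructor
        · have := le_min (hnonneg 0 ω) hA; linarith [min_le_right (a 0 ω) A]
        · have h3 := min_le_right (a 0 ω) A
          have h4 := le_min (hnonneg 0 ω) hA
          linarith
      have hint2 : Integrable (fun ω => (a 0 ω)^2 + (s:ℝ)^2) ℙ := h2.add (integrable_const _)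
      have hm : ∀ ω, (min (a 0 ω) A - (s:ℝ))^2 ≤ (a 0 ω)^2 + (s:ℝ)^2 := by
        intro ω
        have h4 : 0 ≤ min (a 0 ω) A := le_min (hnonneg 0 ω) hA
        have h5 : min (a 0 ω) A ≤ a 0 ω := min_le_left _ _
        nlinarith
      have := integral_mono hintK hint2 hm
      rw [integral_add h2 (integrable_const _), integral_const] at this
      simp only [measure_univ, probReal_univ, ENNReal.toReal_one, smul_eq_mul, one_mul] at this
      linarith
    have hkey : ∀ T : ℕ, 2*ε * ∑ t ∈ range T, ∫ ω, sqQueue s a t ω ≤ T * (σ2 + (s:ℝ)^2) := by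
      intro T
      have hlim : Tendsto (fun A : ℕ =>
          2*ε * ∑ t ∈ range T, ∫ ω, sqQueue s (hSetup A (Nat.cast_nonneg A)).b t ω) atTop
          (𝓝 (2*ε * ∑ t ∈ range T, ∫ ω, sqQueue s a t ω)) :=
        (tendsto_finset_sum (range T) fun t _ => hconv t).const_mul _
      refine le_of_tendsto hlim (Filter.Eventually.of_forall fun A => ?_)
      calc 2*ε * ∑ t ∈ range T, ∫ ω, sqQueue s (hSetup A (Nat.cast_nonneg A)).b t ω
          ≤ T * ∫ ω, (min (a 0 ω) (A:ℝ) - (s:ℝ))^2 :=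
            (hSetup A (Nat.cast_nonneg A)).capped_bound (hβ A (Nat.cast_nonneg A)) T
        _ ≤ T * (σ2 + (s:ℝ)^2) := by
            have := hKb (A:ℝ) (Nat.cast_nonneg A)
            exact mul_le_mul_of_nonneg_left this (Nat.cast_nonneg T)
    have hev : ∀ᶠ T : ℕ in atTop, (1 / (T : ℝ)) * ∑ t ∈ range T, ∫ ω, sqQueue s a t ω
        ≤ (σ2 + (s:ℝ)^2) / (2*ε) := by
      filter_upwards [Filter.eventually_ge_atTop 1] with T hT
      have hT0 : (0:ℝ) < T := by exact_mod_cast hT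
      have hkT := hkey T
      have hS' : (∑ t ∈ range T, ∫ ω, sqQueue s a t ω) ≤ (T:ℝ) * ((σ2 + (s:ℝ)^2)/(2*ε)) := by
        rw [mul_div_assoc', le_div_iff₀ (by linarith : (0:ℝ) < 2*ε)]
        linarith
      have heq : (1/(T:ℝ)) * ((T:ℝ) * ((σ2 + (s:ℝ)^2)/(2*ε))) = (σ2 + (s:ℝ)^2)/(2*ε) := by
        field_simp
      calc (1 / (T : ℝ)) * ∑ t ∈ range T, ∫ ω, sqQueue s a t ω
          ≤ (1/(T:ℝ)) * ((T:ℝ) * ((σ2 + (s:ℝ)^2)/(2*ε))) :=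
            mul_le_mul_of_nonneg_left hS' (by positivity)
        _ = _ := heq
    have hnn : ∀ T : ℕ, (0:ℝ) ≤ (1 / (T : ℝ)) * ∑ t ∈ range T, ∫ ω, sqQueue s a t ω :=
      fun T => mul_nonneg (by positivity)
        (Finset.sum_nonneg fun t _ => integral_nonneg fun ω => sqQueue_nonneg s a t ω)
    exact limsup_le_of_le (isCoboundedUnder_le_of_le atTop hnn) hev
  · -- Case 2b : infinite second moment
    by_cases hbdd : IsBoundedUnder (· ≤ ·) atTop
        (fun T : ℕ => (1 / (T : ℝ)) * ∑ t ∈ range T, ∫ ω, sqQueue s a t ω)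
    swap
    · rw [limsup_of_not_bdd hbdd]; exact hRHS0
    exfalso
    obtain ⟨C, hC⟩ := hbdd
    rw [Filter.eventually_map] at hC
    obtain ⟨N, hN⟩ := Filter.eventually_atTop.mp hC
    set S : ℕ → ℝ := fun T => ∑ t ∈ range T, ∫ ω, sqQueue s a t ω with hSdef
    have hSnn : ∀ T, 0 ≤ S T := fun T =>
      Finset.sum_nonneg fun t _ => integral_nonneg fun ω => sqQueue_nonneg s a t ω
    have hSmono : Monotone S := fun T₁ T₂ h =>
      Finset.sum_le_sum_of_subset_of_nonneg (Finset.range_subset_range.mpr h)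
        (fun t _ _ => integral_nonneg fun ω => sqQueue_nonneg s a t ω)
    set C₁ : ℝ := max C 0 with hC₁def
    have hC₁0 : 0 ≤ C₁ := le_max_right _ _
    set N' : ℕ := max N 1 with hN'def
    set C₀ : ℝ := C₁ * N' with hC₀def
    have hC₀0 : 0 ≤ C₀ := mul_nonneg hC₁0 (Nat.cast_nonneg _)
    have hSC : ∀ T : ℕ, 1 ≤ T → N ≤ T → S T ≤ C₁ * T := by
      intro T h1 hNT
      have hT0 : (0:ℝ) < T := by exact_mod_cast h1
      have hu := hN T hNT
      have he : S T = (T:ℝ) * ((1/(T:ℝ)) * S T) := by field_simp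
      rw [he]
      calc (T:ℝ) * ((1/(T:ℝ)) * S T) ≤ (T:ℝ) * C :=
            mul_le_mul_of_nonneg_left hu (by positivity)
        _ ≤ (T:ℝ) * C₁ := mul_le_mul_of_nonneg_left (le_max_left _ _) (by positivity)
        _ = C₁ * T := mul_comm _ _
    have hSb : ∀ T : ℕ, S T ≤ C₀ + C₁ * T := by
      intro T
      rcases le_or_gt T N' with h | h
      · have h1 : S T ≤ S N' := hSmono h
        have h2 : S N' ≤ C₁ * N' := hSC N' (le_max_right _ _) (le_max_left _ _)
        have h3 : 0 ≤ C₁ * T := mul_nonneg hC₁0 (Nat.cast_nonneg _)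
        rw [hC₀def]
        linarith
      · have h1 : S T ≤ C₁ * T := hSC T (by omega) (by omega)
        linarith
    -- pick a large truncation level
    obtain ⟨A, hAD⟩ := exists_large_trunc (hmeas 0) (hnonneg 0) (fun ω => hint 0 ω) h2
      (2*(s:ℝ)*π + (s:ℝ)^2 + 2*(s:ℝ)*C₁ + C₁ + 2)
    have hA0 : (0:ℝ) ≤ (A:ℝ) := Nat.cast_nonneg A
    set hS := hSetup (A:ℝ) hA0 with hSdef2
    set K : ℝ := ∫ ω, (min (a 0 ω) (A:ℝ) - (s:ℝ))^2 with hKdef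
    have hminint : Integrable (fun ω => min (a 0 ω) (A:ℝ)) ℙ := hS.hbint 0
    have hminnn : ∀ ω, 0 ≤ min (a 0 ω) (A:ℝ) := fun ω => le_min (hnonneg 0 ω) hA0
    have hminA : ∀ ω, min (a 0 ω) (A:ℝ) ≤ (A:ℝ) := fun ω => min_le_right _ _
    have hK : (s:ℝ)^2 + 2*(s:ℝ)*C₁ + C₁ + 2 ≤ K := by
      have hi1 : Integrable (fun ω => (min (a 0 ω) (A:ℝ))^2 - 2*(s:ℝ)*min (a 0 ω) (A:ℝ)) ℙ := by
        refine Integrable.sub ?_ (hminint.const_mul _)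
        refine integrable_of_bdd (((hmeas 0).min measurable_const).pow_const 2)
          (C := (A:ℝ)^2) fun ω => ?_
        rw [abs_pow, abs_of_nonneg (hminnn ω)]
        exact pow_le_pow_left₀ (hminnn ω) (hminA ω) 2
      have hi2 : Integrable (fun ω => (min (a 0 ω) (A:ℝ) - (s:ℝ))^2) ℙ := by
        refine integrable_of_bdd
          ((((hmeas 0).min measurable_const).sub measurable_const).pow_const 2)
          (C := ((A:ℝ) + (s:ℝ))^2) fun ω => ?_
        rw [abs_pow]
        refine pow_le_pow_left₀ (abs_nonneg _) ?_ 2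
        rw [abs_le]
        constructor
        · have := hminnn ω; linarith
        · have := hminA ω; linarith
      have hpt : ∀ ω, (min (a 0 ω) (A:ℝ))^2 - 2*(s:ℝ)*min (a 0 ω) (A:ℝ)
          ≤ (min (a 0 ω) (A:ℝ) - (s:ℝ))^2 := fun ω => by nlinarith [sq_nonneg (s:ℝ)]
      have hmono := integral_mono hi1 hi2 hpt
      have hsplit : ∫ ω, ((min (a 0 ω) (A:ℝ))^2 - 2*(s:ℝ)*min (a 0 ω) (A:ℝ))
          = (∫ ω, (min (a 0 ω) (A:ℝ))^2) - 2*(s:ℝ)*∫ ω, min (a 0 ω) (A:ℝ) := by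
        rw [integral_sub ?_ (hminint.const_mul _), MeasureTheory.integral_const_mul]
        refine integrable_of_bdd (((hmeas 0).min measurable_const).pow_const 2)
          (C := (A:ℝ)^2) fun ω => ?_
        rw [abs_pow, abs_of_nonneg (hminnn ω)]
        exact pow_le_pow_left₀ (hminnn ω) (hminA ω) 2
      have hβle : ∫ ω, min (a 0 ω) (A:ℝ) ≤ π := by
        have := integral_mono hminint hai fun ω => min_le_left (a 0 ω) (A:ℝ)
        rwa [hmean] at this
      rw [hsplit] at hmono
      have hcross : 2*(s:ℝ)*∫ ω, min (a 0 ω) (A:ℝ) ≤ 2*(s:ℝ)*π :=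
        mul_le_mul_of_nonneg_left hβle (by linarith)
      simp only [hKdef]
      linarith
    -- dyadic levels
    set M₀ : ℝ := 2*(A:ℝ) + 1 with hM₀def
    have hM₀pos : 0 < M₀ := by simp only [hM₀def]; linarith
    set J : ℕ := 12*A + 1 with hJdef
    have hJ1 : 1 ≤ J := by omega
    have hMj : ∀ j ∈ Finset.Icc 1 J, 2*(A:ℝ) ≤ (2:ℝ)^j * M₀ := by
      intro j hj
      have hj1 : 1 ≤ j := (Finset.mem_Icc.mp hj).1
      have h2j : (2:ℝ) ≤ (2:ℝ)^j := by
        calc (2:ℝ) = 2^1 := (pow_one 2).symm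
          _ ≤ 2^j := pow_le_pow_right₀ one_le_two hj1
      nlinarith
    -- capped queue sums are below the true queue sums
    have hSQ' : ∀ T : ℕ, ∑ t ∈ range T, (∫ ω, sqQueue s hS.b t ω) ≤ S T := by
      intro T
      refine Finset.sum_le_sum fun t _ => ?_
      refine integral_mono (hS.hQint t) (hQint t) fun ω => ?_
      exact sqQueue_mono s (fun u ω' => min_le_left _ _) t ω
    have hSQ'nn : ∀ T : ℕ, 0 ≤ ∑ t ∈ range T, (∫ ω, sqQueue s hS.b t ω) := fun T =>
      Finset.sum_nonneg fun t _ => integral_nonneg fun ω => sqQueue_nonneg s hS.b t ω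
    -- choose the time horizon
    set T : ℕ := max 1 (Nat.ceil (((2:ℝ)^J*M₀)^2 + 2*(s:ℝ)*C₀ + C₀)) with hTdef
    have hT1 : 1 ≤ T := le_max_left _ _
    have hTreal : ((2:ℝ)^J*M₀)^2 + 2*(s:ℝ)*C₀ + C₀ ≤ (T:ℝ) := by
      calc ((2:ℝ)^J*M₀)^2 + 2*(s:ℝ)*C₀ + C₀
          ≤ (Nat.ceil (((2:ℝ)^J*M₀)^2 + 2*(s:ℝ)*C₀ + C₀) : ℝ) := Nat.le_ceil _
        _ ≤ (T:ℝ) := Nat.cast_le.mpr (le_max_right _ _)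
    -- the telescoped lower bounds, summed over dyadic levels
    have hlev : ∀ j ∈ Finset.Icc 1 J,
        (T:ℝ) * K ≤ ((2:ℝ)^j*M₀)^2 + T*(s:ℝ)^2
          + 2*(s:ℝ) * ∑ t ∈ range T, (∫ ω, sqQueue s hS.b t ω)
          + ∑ t ∈ range T, ∫ ω, hS.eF t ((2:ℝ)^j*M₀) ω := fun j hj =>
      hS.capped_lower (hMj j hj) T
    have hsumlev := Finset.sum_le_sum hlev
    rw [Finset.sum_const, Nat.card_Icc] at hsumlev
    simp only [Nat.add_sub_cancel] at hsumlev
    -- bound the summed right-hand side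
    have hMsq : ∀ j ∈ Finset.Icc 1 J, ((2:ℝ)^j*M₀)^2 ≤ ((2:ℝ)^J*M₀)^2 := by
      intro j hj
      have hjJ : j ≤ J := (Finset.mem_Icc.mp hj).2
      have h1 : (2:ℝ)^j*M₀ ≤ (2:ℝ)^J*M₀ :=
        mul_le_mul_of_nonneg_right (pow_le_pow_right₀ one_le_two hjJ) hM₀pos.le
      have h2 : 0 ≤ (2:ℝ)^j*M₀ := by positivity
      exact pow_le_pow_left₀ h2 h1 2
    -- overflow sums: swap and use the dyadic bound
    have hE : ∑ j ∈ Finset.Icc 1 J, ∑ t ∈ range T, ∫ ω, hS.eF t ((2:ℝ)^j*M₀) ω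
        ≤ (J:ℝ) * (C₀ + C₁*T) := by
      rw [Finset.sum_comm]
      have hstep : ∀ t ∈ range T, ∑ j ∈ Finset.Icc 1 J, ∫ ω, hS.eF t ((2:ℝ)^j*M₀) ω
          ≤ 12*(A:ℝ) * ∫ ω, sqQueue s hS.b t ω := by
        intro t _
        have hint : ∀ j ∈ Finset.Icc 1 J, Integrable (hS.eF t ((2:ℝ)^j*M₀)) ℙ := fun j hj =>
          hS.eF_int (hMj j hj) t
        rw [← integral_finset_sum _ hint]
        have hptw : ∀ ω, ∑ j ∈ Finset.Icc 1 J, hS.eF t ((2:ℝ)^j*M₀) ω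
            ≤ 12*(A:ℝ) * sqQueue s hS.b t ω := by
          intro ω
          have h1 : ∑ j ∈ Finset.Icc 1 J, hS.eF t ((2:ℝ)^j*M₀) ω
              ≤ ∑ j ∈ Finset.Icc 1 J,
                  3*(A:ℝ)*(if (2:ℝ)^j*M₀ ≤ 2 * sqQueue s hS.b t ω then (2:ℝ)^j*M₀ else 0) :=
            Finset.sum_le_sum fun j hj => hS.eF_key (hMj j hj) t ω
          have h2 : ∑ j ∈ Finset.Icc 1 J,
                3*(A:ℝ)*(if (2:ℝ)^j*M₀ ≤ 2 * sqQueue s hS.b t ω then (2:ℝ)^j*M₀ else 0)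
              = 3*(A:ℝ) * ∑ j ∈ Finset.Icc 1 J,
                  (if (2:ℝ)^j*M₀ ≤ 2 * sqQueue s hS.b t ω then (2:ℝ)^j*M₀ else 0) := by
            rw [Finset.mul_sum]
          have h3 := dyadic_sum (sqQueue s hS.b t ω) (sqQueue_nonneg s hS.b t ω) M₀ hM₀pos J
          have h4 : 3*(A:ℝ) * ∑ j ∈ Finset.Icc 1 J,
                (if (2:ℝ)^j*M₀ ≤ 2 * sqQueue s hS.b t ω then (2:ℝ)^j*M₀ else 0)
              ≤ 3*(A:ℝ) * (4 * sqQueue s hS.b t ω) :=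
            mul_le_mul_of_nonneg_left h3 (by positivity)
          calc ∑ j ∈ Finset.Icc 1 J, hS.eF t ((2:ℝ)^j*M₀) ω
              ≤ 3*(A:ℝ) * ∑ j ∈ Finset.Icc 1 J,
                  (if (2:ℝ)^j*M₀ ≤ 2 * sqQueue s hS.b t ω then (2:ℝ)^j*M₀ else 0) := by
                rw [← h2]; exact h1
            _ ≤ 3*(A:ℝ) * (4 * sqQueue s hS.b t ω) := h4
            _ = 12*(A:ℝ) * sqQueue s hS.b t ω := by ring
        have hi : Integrable (fun ω => ∑ j ∈ Finset.Icc 1 J, hS.eF t ((2:ℝ)^j*M₀) ω) ℙ :=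
          integrable_finset_sum _ hint
        have := integral_mono hi ((hS.hQint t).const_mul (12*(A:ℝ))) hptw
        rwa [MeasureTheory.integral_const_mul] at this
      calc ∑ t ∈ range T, ∑ j ∈ Finset.Icc 1 J, ∫ ω, hS.eF t ((2:ℝ)^j*M₀) ω
          ≤ ∑ t ∈ range T, 12*(A:ℝ) * ∫ ω, sqQueue s hS.b t ω :=
            Finset.sum_le_sum hstep
        _ = 12*(A:ℝ) * ∑ t ∈ range T, (∫ ω, sqQueue s hS.b t ω) := by rw [Finset.mul_sum]
        _ ≤ 12*(A:ℝ) * (C₀ + C₁*T) := by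
            refine mul_le_mul_of_nonneg_left ?_ (by positivity)
            exact (hSQ' T).trans (hSb T)
        _ ≤ (J:ℝ) * (C₀ + C₁*T) := by
            have h12 : 12*(A:ℝ) ≤ (J:ℝ) := by
              simp only [hJdef]
              push_cast
              linarith
            have hpos : 0 ≤ C₀ + C₁*T := by positivity
            exact mul_le_mul_of_nonneg_right h12 hpos
    -- assemble
    have hsplit : ∑ j ∈ Finset.Icc 1 J, (((2:ℝ)^j*M₀)^2 + T*(s:ℝ)^2
          + 2*(s:ℝ) * ∑ t ∈ range T, (∫ ω, sqQueue s hS.b t ω)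
          + ∑ t ∈ range T, ∫ ω, hS.eF t ((2:ℝ)^j*M₀) ω)
        ≤ (J:ℝ) * ((2:ℝ)^J*M₀)^2 + (J:ℝ)*(T*(s:ℝ)^2 + 2*(s:ℝ)*(C₀ + C₁*T))
          + (J:ℝ) * (C₀ + C₁*T) := by
      rw [Finset.sum_add_distrib, Finset.sum_add_distrib, Finset.sum_add_distrib]
      have e1 : ∑ j ∈ Finset.Icc 1 J, ((2:ℝ)^j*M₀)^2 ≤ (J:ℝ) * ((2:ℝ)^J*M₀)^2 := by
        calc ∑ j ∈ Finset.Icc 1 J, ((2:ℝ)^j*M₀)^2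
            ≤ ∑ _j ∈ Finset.Icc 1 J, ((2:ℝ)^J*M₀)^2 := Finset.sum_le_sum hMsq
          _ = (J:ℝ) * ((2:ℝ)^J*M₀)^2 := by
              rw [Finset.sum_const, Nat.card_Icc]
              simp [nsmul_eq_mul]
      have e2 : ∑ _j ∈ Finset.Icc 1 J, ((T:ℝ)*(s:ℝ)^2) = (J:ℝ) * ((T:ℝ)*(s:ℝ)^2) := by
        rw [Finset.sum_const, Nat.card_Icc]
        simp [nsmul_eq_mul]
      have e3 : ∑ _j ∈ Finset.Icc 1 J, (2*(s:ℝ) * ∑ t ∈ range T, (∫ ω, sqQueue s hS.b t ω))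
          ≤ (J:ℝ) * (2*(s:ℝ)*(C₀ + C₁*T)) := by
        rw [Finset.sum_const, Nat.card_Icc]
        simp only [Nat.add_sub_cancel, nsmul_eq_mul]
        refine mul_le_mul_of_nonneg_left ?_ (Nat.cast_nonneg J)
        refine mul_le_mul_of_nonneg_left ((hSQ' T).trans (hSb T)) (by linarith)
      have e4 : (J:ℝ)*((T:ℝ)*(s:ℝ)^2 + 2*(s:ℝ)*(C₀ + C₁*T))
          = (J:ℝ)*((T:ℝ)*(s:ℝ)^2) + (J:ℝ)*(2*(s:ℝ)*(C₀ + C₁*T)) := by ring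
      linarith [e1, e2, e3, hE, e4]
    have hcombined : (J:ℝ) * ((T:ℝ) * K)
        ≤ (J:ℝ) * ((2:ℝ)^J*M₀)^2 + (J:ℝ)*(T*(s:ℝ)^2 + 2*(s:ℝ)*(C₀ + C₁*T))
          + (J:ℝ) * (C₀ + C₁*T) := by
      calc (J:ℝ) * ((T:ℝ) * K) ≤ _ := by
            have := hsumlev
            simpa [nsmul_eq_mul] using this
        _ ≤ _ := hsplit
    have hJpos : (0:ℝ) < J := by positivity
    have hTK : (T:ℝ) * K ≤ ((2:ℝ)^J*M₀)^2 + T*(s:ℝ)^2 + 2*(s:ℝ)*(C₀ + C₁*T) + (C₀ + C₁*T) := by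
      have h := hcombined
      have e : (J:ℝ) * (((2:ℝ)^J*M₀)^2 + T*(s:ℝ)^2 + 2*(s:ℝ)*(C₀ + C₁*T) + (C₀ + C₁*T))
          = (J:ℝ) * ((2:ℝ)^J*M₀)^2 + (J:ℝ)*(T*(s:ℝ)^2 + 2*(s:ℝ)*(C₀ + C₁*T))
            + (J:ℝ) * (C₀ + C₁*T) := by ring
      rw [← e] at h
      exact le_of_mul_le_mul_left h hJpos
    have hTpos : (0:ℝ) < (T:ℝ) := by exact_mod_cast hT1
    nlinarith [hTK, hK, hTreal, hTpos, mul_nonneg hs0 hC₀0]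
end
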